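/- Let a, b ∈ ℤ and let f be a holomorphic nowhere-vanishing function on ℂ ∖ {0, 1}. If there exist constants 0 < m ≤ M such that m ≤ |f(z)·z^{−a}·(z−1)^{−b}| ≤ M for all z ∈ ℂ ∖ {0,1}, then there exists c ∈ ℂ* with f(z) = c·zᵃ·(z−1)ᵇ for all z ∈ ℂ ∖ {0,1}. -/

import Mathlib

open Complex Set Bornology

/-- Let `a, b ∈ ℤ` and let `f` be holomorphic and nowhere vanishing on
`ℂ ∖ {0, 1}`.  If `|f(z)·z^{−a}·(z−1)^{−b}|` is bounded above and below by positive
constants, then `f(z) = c·zᵃ·(z−1)ᵇ` for some `c ∈ ℂ*`. -/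
theorem three_punctured_classification (a b : ℤ) (f : ℂ → ℂ)
    (hf : DifferentiableOn ℂ f (({0, 1} : Set ℂ)ᶜ))
    (hne : ∀ z ∈ (({0, 1} : Set ℂ)ᶜ), f z ≠ 0)
    (m M : ℝ) (hm : 0 < m) (hmM : m ≤ M)
    (hbd : ∀ z ∈ (({0, 1} : Set ℂ)ᶜ),
      m ≤ ‖f z * z ^ (-a) * (z - 1) ^ (-b)‖ ∧
        ‖f z * z ^ (-a) * (z - 1) ^ (-b)‖ ≤ M) :
    ∃ c : ℂ, c ≠ 0 ∧ ∀ z ∈ (({0, 1} : Set ℂ)ᶜ), f z = c * z ^ a * (z - 1) ^ b := by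
  set S : Set ℂ := ({0, 1} : Set ℂ)ᶜ with hS
  have hmem : ∀ z : ℂ, z ∈ S ↔ z ≠ 0 ∧ z ≠ 1 := by
    intro z; simp [hS, not_or]
  set g : ℂ → ℂ := fun z => f z * z ^ (-a) * (z - 1) ^ (-b) with hg
  have hgd : DifferentiableOn ℂ g S := by
    intro z hz
    obtain ⟨hz0, hz1⟩ := (hmem z).1 hz
    have h1 : DifferentiableAt ℂ (fun z : ℂ => z ^ (-a)) z :=
      differentiableAt_zpow.2 (Or.inl hz0)
    have h2 : DifferentiableAt ℂ (fun z : ℂ => (z - 1) ^ (-b)) z := by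
      have : DifferentiableAt ℂ (fun z : ℂ => z - 1) z :=
        differentiableAt_id.sub_const 1
      exact this.zpow (Or.inl (sub_ne_zero.2 hz1))
    exact (((hf z hz).mul h1.differentiableWithinAt).mul h2.differentiableWithinAt)
  -- remove the singularity at 1
  set g1 : ℂ → ℂ := Function.update g 1 (Filter.limUnder (nhdsWithin 1 {(1:ℂ)}ᶜ) g) with hg1
  have hsub1 : ({(0:ℂ)}ᶜ : Set ℂ) \ {1} = S := by
    ext z; simp [hS, not_or, and_comm]
  have hgd1 : DifferentiableOn ℂ g1 ({(0:ℂ)}ᶜ) := by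
    apply Complex.differentiableOn_update_limUnder_of_bddAbove
      (isOpen_compl_singleton.mem_nhds (by norm_num))
    · rw [hsub1]; exact hgd
    · refine ⟨M, ?_⟩
      rintro x ⟨z, hz, rfl⟩
      rw [hsub1] at hz
      exact (hbd z hz).2
  -- remove the singularity at 0
  set g2 : ℂ → ℂ := Function.update g1 0 (Filter.limUnder (nhdsWithin 0 {(0:ℂ)}ᶜ) g1) with hg2
  have hsub0 : (univ : Set ℂ) \ {0} = {(0:ℂ)}ᶜ := by ext z; simp
  have hgd2 : Differentiable ℂ g2 := by
    rw [← differentiableOn_univ]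
    apply Complex.differentiableOn_update_limUnder_of_bddAbove (Filter.univ_mem)
    · rw [hsub0]; exact hgd1
    · refine ⟨max M ‖g1 1‖, ?_⟩
      rintro x ⟨z, hz, rfl⟩
      rw [hsub0] at hz
      rcases eq_or_ne z 1 with rfl | hz1
      · exact le_max_right _ _
      · have hzS : z ∈ S := (hmem z).2 ⟨hz, hz1⟩
        have : g1 z = g z := Function.update_of_ne hz1 _ _
        simp only [Function.comp_apply, this]
        exact le_max_of_le_left (hbd z hzS).2
  have hg2g : ∀ z ∈ S, g2 z = g z := by
    intro z hz
    obtain ⟨hz0, hz1⟩ := (hmem z).1 hz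
    rw [hg2, Function.update_of_ne hz0, hg1, Function.update_of_ne hz1]
  -- Liouville
  have hbdd : IsBounded (range g2) := by
    rw [isBounded_iff_forall_norm_le]
    refine ⟨max (max M ‖g1 1‖) ‖g2 0‖, ?_⟩
    rintro x ⟨z, rfl⟩
    rcases eq_or_ne z 0 with rfl | hz0
    · exact le_max_right _ _
    rcases eq_or_ne z 1 with rfl | hz1
    · have : g2 1 = g1 1 := Function.update_of_ne one_ne_zero _ _
      rw [this]; exact le_max_of_le_left (le_max_right _ _)
    · have hzS : z ∈ S := (hmem z).2 ⟨hz0, hz1⟩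
      rw [hg2g z hzS]
      exact le_max_of_le_left (le_max_of_le_left (hbd z hzS).2)
  set c : ℂ := g2 2 with hc
  have hconst : ∀ z : ℂ, g2 z = c := fun z =>
    hgd2.apply_eq_apply_of_bounded hbdd z 2
  have h2S : (2:ℂ) ∈ S := (hmem 2).2 ⟨by norm_num, by norm_num⟩
  have hcne : c ≠ 0 := by
    intro h
    have := (hbd 2 h2S).1
    rw [show f 2 * (2:ℂ) ^ (-a) * ((2:ℂ) - 1) ^ (-b) = g 2 from rfl,
      ← hg2g 2 h2S, ← hc, h] at this
    simp at this
    linarith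
  refine ⟨c, hcne, fun z hz => ?_⟩
  obtain ⟨hz0, hz1⟩ := (hmem z).1 hz
  have hgz : g z = c := by rw [← hg2g z hz, hconst]
  have hz1' : z - 1 ≠ 0 := sub_ne_zero.2 hz1
  have := hgz
  rw [hg] at this
  simp only [zpow_neg] at this
  field_simp at this
  have hne' : z ^ a * (z - 1) ^ b ≠ 0 :=
    mul_ne_zero (zpow_ne_zero _ hz0) (zpow_ne_zero _ hz1')
  rw [this]; ring
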